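/- Let π be a non-crossing annular (m,n)-permutation and let π₁ = π|_{[m]} be the permutation induced by π on [m] = {1,…,m}. Let B̄ ⊆ [m] be the set of all i ∈ [m] whose orbit under π^c = γ_{m,n}π⁻¹ meets both {1,…,m} and {m+1,…,m+n} (i.e., i lies in a through-orbit of π^c). Then B̄ is a single orbit of the permutation γ_m π₁⁻¹ of [m], where γ_m = (1,2,…,m). -/

import Mathlib

/-- The number of orbits of a permutation of `Fin n` (fixed points counted). -/
def numOrbits {n : ℕ} (σ : Equiv.Perm (Fin n)) : ℕ :=
  σ.cycleType.card + (Finset.univ.filter fun x => σ x = x).card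

/-- `B` is an orbit of the permutation `σ`. -/
def IsBlock {n : ℕ} (σ : Equiv.Perm (Fin n)) (B : Set (Fin n)) : Prop :=
  ∃ x, B = {y | σ.SameCycle x y}

/-- `γ_{m,n}`: the permutation of `[m+n]` with the two cycles
`(1,…,m)(m+1,…,m+n)`. -/
def annRot (m n : ℕ) : Equiv.Perm (Fin (m + n)) :=
  finSumFinEquiv.permCongr (Equiv.sumCongr (finRotate m) (finRotate n))

/-- `π` is a non-crossing annular `(m,n)`-permutation: some orbit of `π` meets
both `{1,…,m}` and `{m+1,…,m+n}`, and `#(π) + #(γ_{m,n} π⁻¹) = m + n`. -/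
def IsAnnularNC (m n : ℕ) (π : Equiv.Perm (Fin (m + n))) : Prop :=
  (∃ x y : Fin (m + n), (x : ℕ) < m ∧ m ≤ (y : ℕ) ∧ π.SameCycle x y) ∧
  numOrbits π + numOrbits (annRot m n * π⁻¹) = m + n

open scoped Classical in
/-- The first-return map of `π` to the set `A`: it sends `i` to `π^k i` for the
least `k ≥ 1` with `π^k i ∈ A` (and is the identity if there is no such `k`).
For `i ∈ A` this is the permutation `π|_A` induced by `π` on `A`. -/
noncomputable def firstReturn {N : ℕ} (π : Equiv.Perm (Fin N)) (A : Set (Fin N))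
    (i : Fin N) : Fin N :=
  if h : ∃ k : ℕ, 0 < k ∧ (π ^ k) i ∈ A then (π ^ Nat.find h) i else i


set_option linter.unusedSectionVars false

open Equiv Equiv.Perm Finset

namespace NCAux

open scoped Classical

variable {α : Type*} [Fintype α] [DecidableEq α]

/-- The cycle (class) of `x` under `σ`, as a `Finset`. -/
noncomputable def cls (σ : Perm α) (x : α) : Finset α :=
  Finset.univ.filter fun y => σ.SameCycle x y

lemma mem_cls {σ : Perm α} {x y : α} : y ∈ cls σ x ↔ σ.SameCycle x y := by
  simp [cls]

lemma cls_eq_iff {σ : Perm α} {x y : α} : cls σ x = cls σ y ↔ σ.SameCycle x y := by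
  constructor
  · intro h
    have hy : y ∈ cls σ y := mem_cls.2 (Equiv.Perm.SameCycle.refl _ _)
    rw [← h] at hy; exact mem_cls.1 hy
  · intro h; ext z; simp only [mem_cls]
    exact ⟨fun hz => h.symm.trans hz, fun hz => h.trans hz⟩

/-- Number of `σ`-cycles meeting the finset `S`. -/
noncomputable def ncl (σ : Perm α) (S : Finset α) : ℕ := (S.image (cls σ)).card

/-- Number of `σ`-cycles. -/
noncomputable def ncf (σ : Perm α) : ℕ := ncl σ Finset.univ

lemma ncl_inv (σ : Perm α) (S : Finset α) : ncl σ⁻¹ S = ncl σ S := by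
  have : cls σ⁻¹ = cls σ := by
    funext x; ext y; simp [cls, Equiv.Perm.sameCycle_inv]
  simp [ncl, this]

lemma ncf_inv (σ : Perm α) : ncf σ⁻¹ = ncf σ := ncl_inv σ _

lemma ncf_one : ncf (1 : Perm α) = Fintype.card α := by
  have h : ∀ x : α, cls (1 : Perm α) x = {x} := by
    intro x; ext y; simp [cls, Equiv.Perm.sameCycle_one, eq_comm]
  rw [ncf, ncl]
  rw [show (Finset.univ.image (cls (1 : Perm α))) = Finset.univ.image (fun x : α => ({x} : Finset α)) from by
    apply Finset.image_congr; intro x _; exact h x]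
  rw [Finset.card_image_of_injective _ (fun a b hab => by
    simpa using hab)]
  simp

lemma ncf_eq_one {σ : Perm α} [Nonempty α] (h : ∀ x y : α, σ.SameCycle x y) :
    ncf σ = 1 := by
  obtain ⟨x₀⟩ := ‹Nonempty α›
  have : Finset.univ.image (cls σ) = {cls σ x₀} := by
    apply Finset.eq_singleton_iff_unique_mem.2
    constructor
    · exact Finset.mem_image_of_mem _ (Finset.mem_univ _)
    · intro C hC
      obtain ⟨z, _, rfl⟩ := Finset.mem_image.1 hC
      exact cls_eq_iff.2 (h z x₀)
  rw [ncf, ncl, this, Finset.card_singleton]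

/-- If `g`-fibers refine `f`-fibers on `s`, the `f`-image is no bigger. -/
lemma card_image_le_of_factor {β γ : Type*} [DecidableEq β] [DecidableEq γ]
    (s : Finset α) (f : α → β) (g : α → γ)
    (h : ∀ a ∈ s, ∀ b ∈ s, g a = g b → f a = f b) :
    (s.image f).card ≤ (s.image g).card := by
  rcases s.eq_empty_or_nonempty with rfl | ⟨a₀, ha₀⟩
  · simp
  · set F : γ → β := fun c =>
      if hc : ∃ a ∈ s, g a = c then f hc.choose else f a₀ with hF
    have himg : s.image f = (s.image g).image F := by
      ext b; simp only [Finset.mem_image]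
      constructor
      · rintro ⟨a, ha, rfl⟩
        refine ⟨g a, ⟨a, ha, rfl⟩, ?_⟩
        have hc : ∃ a' ∈ s, g a' = g a := ⟨a, ha, rfl⟩
        rw [hF]; simp only [dif_pos hc]
        exact h _ hc.choose_spec.1 _ ha hc.choose_spec.2
      · rintro ⟨c, ⟨a, ha, rfl⟩, rfl⟩
        have hc : ∃ a' ∈ s, g a' = g a := ⟨a, ha, rfl⟩
        refine ⟨hc.choose, hc.choose_spec.1, ?_⟩
        rw [hF]; simp only [dif_pos hc]
    rw [himg]
    exact Finset.card_image_le

/-- Core merging fact: a cycle of `swap x y * σ` is inside a cycle of `σ`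
or inside the union of the `σ`-cycles of `x` and `y`. -/
lemma sameCycle_swap_mul_cases (σ : Perm α) (x y z w : α)
    (h : (Equiv.swap x y * σ).SameCycle z w) :
    σ.SameCycle z w ∨
      ((σ.SameCycle x z ∨ σ.SameCycle y z) ∧ (σ.SameCycle x w ∨ σ.SameCycle y w)) := by
  set τ := Equiv.swap x y * σ with hτ
  set X : α → Prop := fun u => σ.SameCycle x u ∨ σ.SameCycle y u with hX
  have hXc : ∀ u v : α, σ.SameCycle u v → (X u ↔ X v) := by
    intro u v huv
    constructor
    · rintro (h1 | h1)
      · exact Or.inl (h1.trans huv)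
      · exact Or.inr (h1.trans huv)
    · rintro (h1 | h1)
      · exact Or.inl (h1.trans huv.symm)
      · exact Or.inr (h1.trans huv.symm)
  set R : α → α → Prop := fun u v => σ.SameCycle u v ∨ (X u ∧ X v) with hR
  have hRtrans : ∀ u v w : α, R u v → R v w → R u w := by
    rintro u v w (h1 | ⟨h1, h1'⟩) (h2 | ⟨h2, h2'⟩)
    · exact Or.inl (h1.trans h2)
    · exact Or.inr ⟨(hXc _ _ h1).2 h2, h2'⟩
    · exact Or.inr ⟨h1, (hXc _ _ h2).1 h1'⟩
    · exact Or.inr ⟨h1, h2'⟩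
  have hstep : ∀ u : α, R u (τ u) := by
    intro u
    have hτu : τ u = Equiv.swap x y (σ u) := rfl
    rcases eq_or_ne (σ u) x with hx | hx
    · have : τ u = y := by rw [hτu, hx, Equiv.swap_apply_left]
      rw [this]
      exact Or.inr ⟨Or.inl ⟨-1, by simp [← hx]⟩, Or.inr (Equiv.Perm.SameCycle.refl _ _)⟩
    · rcases eq_or_ne (σ u) y with hy | hy
      · have : τ u = x := by rw [hτu, hy, Equiv.swap_apply_right]
        rw [this]
        exact Or.inr ⟨Or.inr ⟨-1, by simp [← hy]⟩, Or.inl (Equiv.Perm.SameCycle.refl _ _)⟩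
      · have : τ u = σ u := by rw [hτu, Equiv.swap_apply_of_ne_of_ne hx hy]
        rw [this]
        exact Or.inl ⟨1, by simp⟩
  have hpow : ∀ (k : ℕ) (u : α), R u ((τ ^ k) u) := by
    intro k
    induction k with
    | zero => intro u; exact Or.inl (Equiv.Perm.SameCycle.refl _ _)
    | succ k ih =>
      intro u
      have : (τ ^ (k + 1)) u = (τ ^ k) (τ u) := by
        rw [pow_succ]; rfl
      rw [this]
      exact hRtrans _ _ _ (hstep u) (ih (τ u))
  obtain ⟨k, _, hk⟩ := h.exists_pow_eq'
  have := hpow k z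
  rw [hk] at this
  exact this

/-- Multiplying by a swap destroys at most one cycle. -/
lemma ncf_le_swap_mul_add_one (σ : Perm α) (x y : α) :
    ncf σ ≤ ncf (Equiv.swap x y * σ) + 1 := by
  set σ' := Equiv.swap x y * σ with hσ'
  set T : Finset α := Finset.univ.filter fun z => ¬σ.SameCycle y z with hT
  have h1 : Finset.univ.image (cls σ) ⊆ insert (cls σ y) (T.image (cls σ)) := by
    intro C hC
    obtain ⟨z, _, rfl⟩ := Finset.mem_image.1 hC
    by_cases hz : σ.SameCycle y z
    · rw [Finset.mem_insert]; left; exact (cls_eq_iff.2 hz).symm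
    · rw [Finset.mem_insert]; right
      exact Finset.mem_image_of_mem _ (by simp [hT, hz])
  have h2 : (T.image (cls σ)).card ≤ (T.image (cls σ')).card := by
    apply card_image_le_of_factor
    intro a ha b hb hab
    have hsc : σ'.SameCycle a b := cls_eq_iff.1 hab
    rcases sameCycle_swap_mul_cases σ x y a b hsc with h | ⟨ha', hb'⟩
    · exact cls_eq_iff.2 h
    · have hna : ¬σ.SameCycle y a := by simpa [hT] using ha
      have hnb : ¬σ.SameCycle y b := by simpa [hT] using hb
      have hxa : σ.SameCycle x a := ha'.resolve_right hna
      have hxb : σ.SameCycle x b := hb'.resolve_right hnb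
      exact cls_eq_iff.2 (hxa.symm.trans hxb)
  have h3 : (T.image (cls σ')).card ≤ ncf σ' :=
    Finset.card_le_card (Finset.image_subset_image (Finset.subset_univ T))
  calc ncf σ ≤ (insert (cls σ y) (T.image (cls σ))).card := Finset.card_le_card h1
    _ ≤ (T.image (cls σ)).card + 1 := Finset.card_insert_le _ _
    _ ≤ ncf σ' + 1 := by omega

lemma sameCycle_eq_of_fixed {σ : Perm α} {x z : α} (h : σ x = x)
    (hs : σ.SameCycle x z) : z = x := by
  obtain ⟨k, hk⟩ := hs
  rw [← hk]
  exact (σ.zpow_apply_eq_self_of_apply_eq_self h k)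

/-- Splitting a cycle at a non-fixed point increases the cycle count by exactly one. -/
lemma ncf_swap_mul_eq (β : Perm α) (x : α) (hx : β x ≠ x) :
    ncf (Equiv.swap x (β x) * β) = ncf β + 1 := by
  set β' := Equiv.swap x (β x) * β with hβ'
  have hββ' : β = Equiv.swap x (β x) * β' := by
    rw [hβ', ← mul_assoc, Equiv.swap_mul_self, one_mul]
  have hle : ncf β' ≤ ncf β + 1 := by
    have := ncf_le_swap_mul_add_one β' x (β x)
    rwa [← hββ'] at this
  have hβ'x : β' x = x := by
    rw [hβ']; simp [Equiv.Perm.mul_apply, Equiv.swap_apply_right]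
  -- every β'-cycle is inside a β-cycle
  have hdown : ∀ a b : α, β'.SameCycle a b → β.SameCycle a b := by
    intro a b h
    rcases sameCycle_swap_mul_cases β x (β x) a b h with h | ⟨ha, hb⟩
    · exact h
    · have hxx : β.SameCycle x (β x) := ⟨1, by simp⟩
      have ha' : β.SameCycle x a := by rcases ha with h | h; exact h; exact hxx.trans h
      have hb' : β.SameCycle x b := by rcases hb with h | h; exact h; exact hxx.trans h
      exact ha'.symm.trans hb'
  have hge : ncf β + 1 ≤ ncf β' := by
    set U : Finset α := Finset.univ.erase x with hU
    have hU1 : Finset.univ.image (cls β) = U.image (cls β) := by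
      apply Finset.Subset.antisymm
      · intro C hC
        obtain ⟨z, _, rfl⟩ := Finset.mem_image.1 hC
        rcases eq_or_ne z x with rfl | hz
        · have : cls β z = cls β (β z) := cls_eq_iff.2 ⟨1, by simp⟩
          rw [this]
          exact Finset.mem_image_of_mem _ (Finset.mem_erase.2 ⟨fun hc => hx (by rw [hc]), Finset.mem_univ _⟩)
        · exact Finset.mem_image_of_mem _ (Finset.mem_erase.2 ⟨hz, Finset.mem_univ _⟩)
      · exact Finset.image_subset_image (Finset.subset_univ U)
    have hU2 : (U.image (cls β)).card ≤ (U.image (cls β')).card := by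
      apply card_image_le_of_factor
      intro a _ b _ hab
      exact cls_eq_iff.2 (hdown a b (cls_eq_iff.1 hab))
    have hU3 : U.image (cls β') = (Finset.univ.image (cls β')).erase (cls β' x) := by
      ext C
      simp only [Finset.mem_image, Finset.mem_erase, hU]
      constructor
      · rintro ⟨z, hz, rfl⟩
        obtain ⟨hz1, _⟩ := hz
        refine ⟨?_, z, Finset.mem_univ _, rfl⟩
        intro hc
        exact hz1 (sameCycle_eq_of_fixed hβ'x (cls_eq_iff.1 hc).symm)
      · rintro ⟨hC, z, _, rfl⟩
        refine ⟨z, ⟨?_, Finset.mem_univ _⟩, rfl⟩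
        rintro rfl
        exact hC rfl
    have hmem : cls β' x ∈ Finset.univ.image (cls β') :=
      Finset.mem_image_of_mem _ (Finset.mem_univ _)
    have hcard : (U.image (cls β')).card = ncf β' - 1 := by
      rw [hU3, Finset.card_erase_of_mem hmem]; rfl
    have hpos : 1 ≤ ncf β' := Finset.card_pos.2 ⟨cls β' x, hmem⟩
    have : ncf β ≤ ncf β' - 1 := by
      calc ncf β = (U.image (cls β)).card := by rw [ncf, ncl, hU1]
        _ ≤ (U.image (cls β')).card := hU2
        _ = ncf β' - 1 := hcard
    omega
  omega
/-- Every permutation factors into `card α - ncf β` swaps. -/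
lemma exists_swap_factorization (β : Perm α) :
    ∃ l : List (Perm α), (∀ τ ∈ l, ∃ a b : α, τ = Equiv.swap a b) ∧ l.prod = β ∧
      Fintype.card α = l.length + ncf β := by
  generalize hk : β.support.card = k
  induction k using Nat.strong_induction_on generalizing β with
  | _ k ih =>
    rcases eq_or_ne β 1 with rfl | hβ1
    · exact ⟨[], by simp, by simp, by rw [ncf_one]; simp⟩
    · have : ∃ x, β x ≠ x := by
        by_contra h
        push_neg at h
        exact hβ1 (Equiv.ext h)
      obtain ⟨x, hx⟩ := this
      set β' := Equiv.swap x (β x) * β with hβ'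
      have hββ' : β = Equiv.swap x (β x) * β' := by
        rw [hβ', ← mul_assoc, Equiv.swap_mul_self, one_mul]
      have hsupp : β'.support ⊆ β.support.erase x := by
        intro z hz
        have hz' : β' z ≠ z := Equiv.Perm.mem_support.1 hz
        have hzx : z ≠ x := by
          rintro rfl
          apply hz'
          rw [hβ']; simp [Equiv.Perm.mul_apply, Equiv.swap_apply_right]
        refine Finset.mem_erase.2 ⟨hzx, Equiv.Perm.mem_support.2 ?_⟩
        intro hc
        apply hz'
        rw [hβ', Equiv.Perm.mul_apply, hc]
        rcases eq_or_ne z (β x) with rfl | hzbx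
        · exact absurd (β.injective hc) hx
        · exact Equiv.swap_apply_of_ne_of_ne hzx hzbx
      have hxmem : x ∈ β.support := Equiv.Perm.mem_support.2 hx
      have hlt : β'.support.card < k := by
        rw [← hk]
        calc β'.support.card ≤ (β.support.erase x).card := Finset.card_le_card hsupp
          _ < β.support.card := by
            rw [Finset.card_erase_of_mem hxmem]
            have : 0 < β.support.card := Finset.card_pos.2 ⟨x, hxmem⟩
            omega
      obtain ⟨l', hl'1, hl'2, hl'3⟩ := ih _ hlt β' rfl
      refine ⟨Equiv.swap x (β x) :: l', ?_, ?_, ?_⟩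
      · intro τ hτ
        rcases List.mem_cons.1 hτ with rfl | hτ
        · exact ⟨x, β x, rfl⟩
        · exact hl'1 τ hτ
      · rw [List.prod_cons, hl'2, ← hββ']
      · have := ncf_swap_mul_eq β x hx
        rw [← hβ'] at this
        simp only [List.length_cons]
        omega

lemma card_le_ncf_prod_add_length (l : List (Perm α))
    (hl : ∀ τ ∈ l, ∃ a b : α, τ = Equiv.swap a b) :
    Fintype.card α ≤ ncf l.prod + l.length := by
  induction l with
  | nil => simp [ncf_one]
  | cons τ l ih =>
    have hτ := hl τ (List.mem_cons_self)
    obtain ⟨a, b, rfl⟩ := hτ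
    have h1 : ncf l.prod ≤ ncf (Equiv.swap a b * l.prod) + 1 :=
      ncf_le_swap_mul_add_one _ a b
    have h2 := ih fun τ hτ => hl τ (List.mem_cons_of_mem _ hτ)
    rw [List.prod_cons]
    simp only [List.length_cons]
    omega

/-- Genus-type subadditivity: `ncf A + ncf B ≤ card α + ncf (B * A)`. -/
lemma ncf_genus (A B : Perm α) : ncf A + ncf B ≤ Fintype.card α + ncf (B * A) := by
  obtain ⟨lA, hA1, hA2, hA3⟩ := exists_swap_factorization A
  obtain ⟨lB, hB1, hB2, hB3⟩ := exists_swap_factorization B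
  have hprod : (lB ++ lA).prod = B * A := by rw [List.prod_append, hA2, hB2]
  have := card_le_ncf_prod_add_length (lB ++ lA) (by
    intro τ hτ
    rcases List.mem_append.1 hτ with h | h
    · exact hB1 τ h
    · exact hA1 τ h)
  rw [hprod, List.length_append] at this
  omega

/-- Transfer cycle counts along an injection intertwining `SameCycle` on `S`. -/
lemma ncl_transfer {β : Type*} [Fintype β] [DecidableEq β]
    (f : β → α) (σY : Perm β) (σX : Perm α) (S : Finset β)
    (h : ∀ a ∈ S, ∀ b ∈ S, (σY.SameCycle a b ↔ σX.SameCycle (f a) (f b))) :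
    ncl σY S = ncl σX (S.image f) := by
  rw [ncl, ncl, Finset.image_image]
  apply le_antisymm
  · apply card_image_le_of_factor
    intro a ha b hb hab
    exact cls_eq_iff.2 ((h a ha b hb).2 (cls_eq_iff.1 hab))
  · apply card_image_le_of_factor
    intro a ha b hb hab
    exact cls_eq_iff.2 ((h a ha b hb).1 (cls_eq_iff.1 hab))

/-- Cycle counts add over class-separated finsets. -/
lemma ncl_union {σ : Perm α} {S T : Finset α}
    (h : ∀ a ∈ S, ∀ b ∈ T, ¬σ.SameCycle a b) :
    ncl σ (S ∪ T) = ncl σ S + ncl σ T := by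
  rw [ncl, Finset.image_union]
  rw [Finset.card_union_of_disjoint, ncl, ncl]
  rw [Finset.disjoint_left]
  intro C hCS hCT
  obtain ⟨a, ha, rfl⟩ := Finset.mem_image.1 hCS
  obtain ⟨b, hb, hba⟩ := Finset.mem_image.1 hCT
  exact h a ha b hb (cls_eq_iff.1 hba.symm)
lemma cls_of_fixed {σ : Perm α} {b : α} (hb : σ b = b) : cls σ b = {b} := by
  ext y
  simp only [mem_cls, Finset.mem_singleton]
  exact ⟨fun h => sameCycle_eq_of_fixed hb h, fun h => h ▸ Equiv.Perm.SameCycle.refl _ _⟩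

lemma ncl_support_compl (σ : Perm α) : ncl σ σ.supportᶜ = σ.supportᶜ.card := by
  rw [ncl]
  apply Finset.card_image_of_injOn
  intro a ha b hb hab
  have ha' : σ a = a := by simpa [Equiv.Perm.mem_support] using ha
  exact (sameCycle_eq_of_fixed ha' (cls_eq_iff.1 hab)).symm

lemma ncl_support (σ : Perm α) : ncl σ σ.support = σ.cycleType.card := by
  have himg : σ.support.image (cls σ) = σ.cycleFactorsFinset.image Equiv.Perm.support := by
    apply Finset.Subset.antisymm
    · intro C hC
      obtain ⟨x, hx, rfl⟩ := Finset.mem_image.1 hC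
      have h1 : cls σ x = (σ.cycleOf x).support := by
        ext y
        rw [mem_cls, Equiv.Perm.mem_support_cycleOf_iff]
        exact ⟨fun h => ⟨h, hx⟩, fun h => h.1⟩
      rw [h1]
      exact Finset.mem_image_of_mem _ (Equiv.Perm.cycleOf_mem_cycleFactorsFinset_iff.2 hx)
    · intro C hC
      obtain ⟨c, hc, rfl⟩ := Finset.mem_image.1 hC
      have hcyc := (Equiv.Perm.mem_cycleFactorsFinset_iff.1 hc).1
      have hagree := (Equiv.Perm.mem_cycleFactorsFinset_iff.1 hc).2
      obtain ⟨x, hx, -⟩ := hcyc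
      have hxc : x ∈ c.support := Equiv.Perm.mem_support.2 hx
      have hxσ : x ∈ σ.support := by
        rw [Equiv.Perm.mem_support, ← hagree x hxc]
        exact hx
      have hcx : c = σ.cycleOf x := Equiv.Perm.cycle_is_cycleOf hxc hc
      have h1 : cls σ x = c.support := by
        rw [hcx]
        ext y
        rw [mem_cls, Equiv.Perm.mem_support_cycleOf_iff]
        exact ⟨fun h => ⟨h, hxσ⟩, fun h => h.1⟩
      rw [← h1]
      exact Finset.mem_image_of_mem _ hxσ
  rw [ncl, himg]
  rw [Finset.card_image_of_injOn, Equiv.Perm.cycleType_def, Multiset.card_map]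
  · rfl
  · intro c hc d hd hcd
    simp only [Finset.mem_coe] at hc hd
    have hcyc := (Equiv.Perm.mem_cycleFactorsFinset_iff.1 hc).1
    obtain ⟨x, hx, -⟩ := hcyc
    have hxc : x ∈ c.support := Equiv.Perm.mem_support.2 hx
    have hxd : x ∈ d.support := by rw [← hcd]; exact hxc
    rw [Equiv.Perm.cycle_is_cycleOf hxc hc, Equiv.Perm.cycle_is_cycleOf hxd hd]

lemma numOrbits_eq_ncf {n : ℕ} (σ : Perm (Fin n)) : numOrbits σ = ncf σ := by
  have hsat : ∀ a ∈ σ.support, ∀ b ∈ σ.supportᶜ, ¬σ.SameCycle a b := by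
    intro a ha b hb hab
    have hb' : σ b = b := by simpa [Equiv.Perm.mem_support] using hb
    have := sameCycle_eq_of_fixed hb' hab.symm
    rw [this] at ha
    simp [Equiv.Perm.mem_support, hb'] at ha
  have hu : σ.support ∪ σ.supportᶜ = Finset.univ := Finset.union_compl _
  have := ncl_union (σ := σ) hsat
  rw [hu] at this
  rw [numOrbits, ncf, this, ncl_support, ncl_support_compl]
  congr 1
  have : σ.supportᶜ = Finset.univ.filter fun x => σ x = x := by
    ext x
    simp [Equiv.Perm.mem_support]
  rw [this]
section Return

variable {N : ℕ}

lemma exists_return (π : Perm (Fin N)) (S : Set (Fin N)) {i : Fin N} (hi : i ∈ S) :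
    ∃ k : ℕ, 0 < k ∧ (π ^ k) i ∈ S :=
  ⟨orderOf π, orderOf_pos π, by rw [pow_orderOf_eq_one]; exact hi⟩

lemma firstReturn_spec (π : Perm (Fin N)) (S : Set (Fin N)) {i : Fin N} (hi : i ∈ S) :
    ∃ k : ℕ, 0 < k ∧ firstReturn π S i = (π ^ k) i ∧ firstReturn π S i ∈ S ∧
      ∀ j : ℕ, 0 < j → j < k → (π ^ j) i ∉ S := by
  have h : ∃ k : ℕ, 0 < k ∧ (π ^ k) i ∈ S := exists_return π S hi
  unfold firstReturn
  rw [dif_pos h]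
  exact ⟨Nat.find h, (Nat.find_spec h).1, rfl, (Nat.find_spec h).2,
    fun j hj1 hj2 hjS => Nat.find_min h hj2 ⟨hj1, hjS⟩⟩

lemma firstReturn_mem (π : Perm (Fin N)) (S : Set (Fin N)) {i : Fin N} (hi : i ∈ S) :
    firstReturn π S i ∈ S := by
  obtain ⟨k, _, _, hmem, _⟩ := firstReturn_spec π S hi
  exact hmem

lemma firstReturn_injOn (π : Perm (Fin N)) (S : Set (Fin N)) :
    ∀ i ∈ S, ∀ j ∈ S, firstReturn π S i = firstReturn π S j → i = j := by
  have key : ∀ (k l : ℕ), k ≤ l → 0 < k → ∀ i ∈ S, ∀ j : Fin N,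
      (∀ t, 0 < t → t < l → (π ^ t) j ∉ S) → (π ^ k) i = (π ^ l) j → i = j := by
    intro k l hkl hk i hi j hjmin heq
    have hl : (π ^ l) j = (π ^ k) ((π ^ (l - k)) j) := by
      rw [← Equiv.Perm.mul_apply, ← pow_add, show k + (l - k) = l by omega]
    have hij : i = (π ^ (l - k)) j := by
      apply (π ^ k).injective
      rw [heq, hl]
    rcases Nat.eq_zero_or_pos (l - k) with h0 | hpos
    · rw [hij, h0]; simp
    · exfalso
      exact hjmin (l - k) hpos (by omega) (hij ▸ hi)
  intro i hi j hj heq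
  obtain ⟨k, hk0, hki, _, hkmin⟩ := firstReturn_spec π S hi
  obtain ⟨l, hl0, hlj, _, hlmin⟩ := firstReturn_spec π S hj
  rcases le_total k l with h | h
  · exact key k l h hk0 i hi j hlmin (by rw [← hki, ← hlj, heq])
  · exact (key l k h hl0 j hj i hkmin (by rw [← hki, ← hlj, heq])).symm

/-- The induced (first-return) permutation on `S`. -/
noncomputable def retPerm (π : Perm (Fin N)) (S : Set (Fin N)) : Perm S :=
  Equiv.ofBijective (fun a => ⟨firstReturn π S a.1, firstReturn_mem π S a.2⟩)
    (Finite.injective_iff_bijective.1 (fun a b hab => Subtype.ext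
      (firstReturn_injOn π S a.1 a.2 b.1 b.2 (congrArg Subtype.val hab))))

lemma retPerm_apply_val (π : Perm (Fin N)) (S : Set (Fin N)) (a : S) :
    ((retPerm π S) a).1 = firstReturn π S a.1 := rfl

lemma retPerm_pow_val (π : Perm (Fin N)) (S : Set (Fin N)) (a : S) (s : ℕ) :
    ∃ K : ℕ, (((retPerm π S) ^ s) a).1 = (π ^ K) a.1 := by
  induction s with
  | zero => exact ⟨0, by simp⟩
  | succ s ih =>
    obtain ⟨K, hK⟩ := ih
    obtain ⟨k, _, heq, _, _⟩ := firstReturn_spec π S ((((retPerm π S) ^ s) a).2)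
    refine ⟨k + K, ?_⟩
    have h1 : ((retPerm π S) ^ (s + 1)) a = (retPerm π S) (((retPerm π S) ^ s) a) := by
      rw [pow_succ']
      rfl
    rw [h1]
    have h2 : ((retPerm π S) (((retPerm π S) ^ s) a)).1
        = (π ^ k) ((((retPerm π S) ^ s) a).1) := by
      rw [retPerm_apply_val]
      exact heq
    rw [h2, hK, ← Equiv.Perm.mul_apply, ← pow_add]

lemma retPerm_sameCycle (π : Perm (Fin N)) (S : Set (Fin N)) (a b : S) :
    (retPerm π S).SameCycle a b ↔ π.SameCycle a.1 b.1 := by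
  constructor
  · intro h
    obtain ⟨s, _, hs⟩ := h.exists_pow_eq'
    obtain ⟨K, hK⟩ := retPerm_pow_val π S a s
    refine ⟨(K : ℤ), ?_⟩
    rw [zpow_natCast, ← hK, hs]
  · intro h
    have key : ∀ K : ℕ, ∀ a b : S, (π ^ K) a.1 = b.1 → (retPerm π S).SameCycle a b := by
      intro K
      induction K using Nat.strong_induction_on with
      | _ K ih =>
        intro a b hK
        rcases Nat.eq_zero_or_pos K with rfl | hKpos
        · have : a = b := Subtype.ext (by simpa using hK)
          rw [this]
        · obtain ⟨k, hk0, heq, hmem, hmin⟩ := firstReturn_spec π S a.2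
          have hkK : k ≤ K := by
            by_contra hcon
            push_neg at hcon
            exact hmin K hKpos hcon (hK ▸ b.2)
          have hstep : (π ^ (K - k)) (((retPerm π S) a).1) = b.1 := by
            rw [retPerm_apply_val, heq, ← Equiv.Perm.mul_apply, ← pow_add]
            rw [show K - k + k = K by omega]
            exact hK
          have h1 := ih (K - k) (by omega) ((retPerm π S) a) b hstep
          exact (show (retPerm π S).SameCycle a ((retPerm π S) a) from ⟨1, by simp⟩).trans h1
    obtain ⟨s, _, hs⟩ := h.exists_pow_eq'
    exact key s a b hs

end Return

lemma sameCycle_map {β γ : Type*} [Fintype β] (p : Perm β) (q : Perm γ) (f : β → γ)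
    (hf : ∀ x, q (f x) = f (p x)) {i j : β} (h : p.SameCycle i j) :
    q.SameCycle (f i) (f j) := by
  have hpow : ∀ (t : ℕ) (x : β), (q ^ t) (f x) = f ((p ^ t) x) := by
    intro t
    induction t with
    | zero => intro x; simp
    | succ t ih =>
      intro x
      rw [pow_succ, pow_succ, Equiv.Perm.mul_apply, Equiv.Perm.mul_apply, hf, ih]
  obtain ⟨k, _, hk⟩ := h.exists_pow_eq'
  exact ⟨(k : ℤ), by rw [zpow_natCast, hpow, hk]⟩
section Rot

lemma annRot_castAdd (m n : ℕ) (i : Fin m) :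
    annRot m n (Fin.castAdd n i) = Fin.castAdd n (finRotate m i) := by
  simp [annRot, Equiv.permCongr_apply]

lemma annRot_natAdd (m n : ℕ) (j : Fin n) :
    annRot m n (Fin.natAdd m j) = Fin.natAdd m (finRotate n j) := by
  simp [annRot, Equiv.permCongr_apply]

lemma annRot_lt_iff {m n : ℕ} (x : Fin (m + n)) :
    ((annRot m n x : ℕ) < m) ↔ ((x : ℕ) < m) := by
  rcases lt_or_ge (x : ℕ) m with h | h
  · have hx : x = Fin.castAdd n ⟨(x : ℕ), h⟩ := by
      apply Fin.ext; rfl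
    rw [hx, annRot_castAdd]
    simp [h]
  · have hx : x = Fin.natAdd m ⟨(x : ℕ) - m, by omega⟩ := by
      apply Fin.ext; simp; omega
    rw [hx, annRot_natAdd]
    simp

lemma sameCycle_finRotate {m : ℕ} (x y : Fin m) : (finRotate m).SameCycle x y := by
  match m with
  | 0 => exact x.elim0
  | 1 =>
    have : x = y := Subsingleton.elim x y
    rw [this]
  | (m + 2) =>
    apply isCycle_finRotate.sameCycle <;>
    · apply Equiv.Perm.mem_support.1
      rw [support_finRotate]
      exact Finset.mem_univ _

end Rot

section Through

variable {N : ℕ}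

/-- Elements of `S` whose whole cycle stays in `S`. -/
noncomputable def wsF (τ : Perm (Fin N)) (S : Set (Fin N)) : Finset (Fin N) :=
  Finset.univ.filter fun x => x ∈ S ∧ ∀ j, τ.SameCycle x j → j ∈ S

/-- Elements of `S` whose cycle leaves `S`. -/
noncomputable def thrF (τ : Perm (Fin N)) (S : Set (Fin N)) : Finset (Fin N) :=
  Finset.univ.filter fun x => x ∈ S ∧ ∃ j, τ.SameCycle x j ∧ j ∉ S

/-- Elements whose cycle meets both `S` and its complement. -/
noncomputable def ttF (τ : Perm (Fin N)) (S : Set (Fin N)) : Finset (Fin N) :=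
  Finset.univ.filter fun x => (∃ j, τ.SameCycle x j ∧ j ∈ S) ∧ (∃ j, τ.SameCycle x j ∧ j ∉ S)

/-- `S` as a finset. -/
noncomputable def sF (S : Set (Fin N)) : Finset (Fin N) :=
  Finset.univ.filter fun x => x ∈ S

lemma mem_wsF {τ : Perm (Fin N)} {S : Set (Fin N)} {x : Fin N} :
    x ∈ wsF τ S ↔ x ∈ S ∧ ∀ j, τ.SameCycle x j → j ∈ S := by simp [wsF]

lemma mem_thrF {τ : Perm (Fin N)} {S : Set (Fin N)} {x : Fin N} :
    x ∈ thrF τ S ↔ x ∈ S ∧ ∃ j, τ.SameCycle x j ∧ j ∉ S := by simp [thrF]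

lemma mem_ttF {τ : Perm (Fin N)} {S : Set (Fin N)} {x : Fin N} :
    x ∈ ttF τ S ↔ (∃ j, τ.SameCycle x j ∧ j ∈ S) ∧ (∃ j, τ.SameCycle x j ∧ j ∉ S) := by
  simp [ttF]

lemma mem_sF {S : Set (Fin N)} {x : Fin N} : x ∈ sF S ↔ x ∈ S := by simp [sF]

lemma decompS (τ : Perm (Fin N)) (S : Set (Fin N)) :
    ncl τ (sF S) = ncl τ (wsF τ S) + ncl τ (thrF τ S) := by
  have hunion : wsF τ S ∪ thrF τ S = sF S := by
    ext x
    simp only [Finset.mem_union, mem_wsF, mem_thrF, mem_sF]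
    constructor
    · rintro (⟨h, -⟩ | ⟨h, -⟩) <;> exact h
    · intro h
      by_cases hc : ∀ j, τ.SameCycle x j → j ∈ S
      · exact Or.inl ⟨h, hc⟩
      · push_neg at hc
        obtain ⟨j, hj1, hj2⟩ := hc
        exact Or.inr ⟨h, j, hj1, hj2⟩
  rw [← hunion]
  apply ncl_union
  intro a ha b hb hab
  obtain ⟨-, hall⟩ := mem_wsF.1 ha
  obtain ⟨-, j, hj1, hj2⟩ := mem_thrF.1 hb
  exact hj2 (hall j (hab.trans hj1))

lemma thr_tt (τ : Perm (Fin N)) (S : Set (Fin N)) :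
    ncl τ (thrF τ S) = ncl τ (ttF τ S) := by
  rw [ncl, ncl]
  congr 1
  apply Finset.Subset.antisymm
  · intro C hC
    obtain ⟨x, hx, rfl⟩ := Finset.mem_image.1 hC
    obtain ⟨hxS, j, hj1, hj2⟩ := mem_thrF.1 hx
    exact Finset.mem_image_of_mem _ (mem_ttF.2
      ⟨⟨x, Equiv.Perm.SameCycle.refl _ _, hxS⟩, ⟨j, hj1, hj2⟩⟩)
  · intro C hC
    obtain ⟨x, hx, rfl⟩ := Finset.mem_image.1 hC
    obtain ⟨⟨j, hj1, hj2⟩, ⟨k, hk1, hk2⟩⟩ := mem_ttF.1 hx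
    have hj : j ∈ thrF τ S := mem_thrF.2 ⟨hj2, k, hj1.symm.trans hk1, hk2⟩
    have : cls τ x = cls τ j := cls_eq_iff.2 hj1
    rw [this]
    exact Finset.mem_image_of_mem _ hj

lemma ttF_compl (τ : Perm (Fin N)) (S : Set (Fin N)) : ttF τ Sᶜ = ttF τ S := by
  ext x
  simp only [mem_ttF, Set.mem_compl_iff, not_not]
  tauto

lemma decompU (τ : Perm (Fin N)) (S : Set (Fin N)) :
    ncf τ = ncl τ (wsF τ S) + ncl τ (wsF τ Sᶜ) + ncl τ (ttF τ S) := by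
  have hu : (wsF τ S ∪ wsF τ Sᶜ) ∪ ttF τ S = Finset.univ := by
    ext x
    simp only [Finset.mem_union, mem_wsF, mem_ttF, Set.mem_compl_iff, Finset.mem_univ,
      iff_true]
    by_cases h1 : ∀ j, τ.SameCycle x j → j ∈ S
    · exact Or.inl (Or.inl ⟨h1 x (Equiv.Perm.SameCycle.refl _ _), h1⟩)
    · push_neg at h1
      obtain ⟨j, hj1, hj2⟩ := h1
      by_cases h2 : ∀ k, τ.SameCycle x k → k ∉ S
      · exact Or.inl (Or.inr ⟨h2 x (Equiv.Perm.SameCycle.refl _ _), h2⟩)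
      · push_neg at h2
        obtain ⟨k, hk1, hk2⟩ := h2
        exact Or.inr ⟨⟨k, hk1, hk2⟩, ⟨j, hj1, hj2⟩⟩
  have hsat1 : ∀ a ∈ wsF τ S, ∀ b ∈ wsF τ Sᶜ, ¬τ.SameCycle a b := by
    intro a ha b hb hab
    obtain ⟨-, hall⟩ := mem_wsF.1 ha
    obtain ⟨hbS, -⟩ := mem_wsF.1 hb
    exact hbS (hall b hab)
  have hsat2 : ∀ a ∈ wsF τ S ∪ wsF τ Sᶜ, ∀ b ∈ ttF τ S, ¬τ.SameCycle a b := by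
    intro a ha b hb hab
    obtain ⟨⟨j, hj1, hj2⟩, ⟨k, hk1, hk2⟩⟩ := mem_ttF.1 hb
    rcases Finset.mem_union.1 ha with ha | ha
    · obtain ⟨-, hall⟩ := mem_wsF.1 ha
      exact hk2 (hall k (hab.trans hk1))
    · obtain ⟨-, hall⟩ := mem_wsF.1 ha
      exact hall j (hab.trans hj1) hj2
  calc ncf τ = ncl τ ((wsF τ S ∪ wsF τ Sᶜ) ∪ ttF τ S) := by rw [hu]; rfl
    _ = ncl τ (wsF τ S ∪ wsF τ Sᶜ) + ncl τ (ttF τ S) := ncl_union hsat2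
    _ = ncl τ (wsF τ S) + ncl τ (wsF τ Sᶜ) + ncl τ (ttF τ S) := by rw [ncl_union hsat1]

lemma identityS (τ : Perm (Fin N)) (S : Set (Fin N)) :
    ncl τ (sF S) + ncl τ (sF Sᶜ) = ncf τ + ncl τ (ttF τ S) := by
  have h1 := decompS τ S
  have h2 := decompS τ Sᶜ
  have h3 := thr_tt τ S
  have h4 := thr_tt τ Sᶜ
  have h5 := decompU τ S
  rw [ttF_compl] at h4
  omega

lemma tt_conj (τ γ : Perm (Fin N)) (S : Set (Fin N)) (hγ : ∀ x, x ∈ S ↔ γ x ∈ S) :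
    ncl (γ * τ * γ⁻¹) (ttF (γ * τ * γ⁻¹) S) = ncl τ (ttF τ S) := by
  have himg : ttF (γ * τ * γ⁻¹) S = (ttF τ S).image γ := by
    ext x
    have hmemim : x ∈ (ttF τ S).image γ ↔ γ⁻¹ x ∈ ttF τ S := by
      constructor
      · rintro h
        obtain ⟨y, hy, rfl⟩ := Finset.mem_image.1 h
        simpa using hy
      · intro h
        exact Finset.mem_image.2 ⟨γ⁻¹ x, h, by simp⟩
    rw [hmemim, mem_ttF, mem_ttF]
    have hsc : ∀ j : Fin N, (γ * τ * γ⁻¹).SameCycle x j ↔ τ.SameCycle (γ⁻¹ x) (γ⁻¹ j) :=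
      fun j => Equiv.Perm.sameCycle_conj
    constructor
    · rintro ⟨⟨j, hj1, hj2⟩, ⟨k, hk1, hk2⟩⟩
      refine ⟨⟨γ⁻¹ j, (hsc j).1 hj1, (hγ _).2 (by simpa using hj2)⟩,
        ⟨γ⁻¹ k, (hsc k).1 hk1, fun hc => hk2 (by simpa using (hγ _).1 hc)⟩⟩
    · rintro ⟨⟨j, hj1, hj2⟩, ⟨k, hk1, hk2⟩⟩
      refine ⟨⟨γ j, (hsc (γ j)).2 (by simpa using hj1), (hγ _).1 hj2⟩,
        ⟨γ k, (hsc (γ k)).2 (by simpa using hk1), fun hc => hk2 ?_⟩⟩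
      have := (hγ k).2 hc
      exact this
  rw [himg]
  exact (ncl_transfer γ τ (γ * τ * γ⁻¹) (ttF τ S) (fun a _ b _ => by
    rw [Equiv.Perm.sameCycle_conj]
    simp)).symm
end Through
section Side

variable {N : ℕ}

lemma side_main (π γ : Perm (Fin N)) (S : Set (Fin N))
    (hγS : ∀ x : Fin N, x ∈ S ↔ γ x ∈ S)
    (hrot : ∀ a b : S, (γ.subtypePerm (fun x => (hγS x).symm)).SameCycle a b)
    (hSne : S.Nonempty) :
    ∃ u : ℕ,
      ncf (γ.subtypePerm (fun x => (hγS x).symm) * (retPerm π S)⁻¹) = ncl (γ * π⁻¹) (wsF (γ * π⁻¹) S) + u ∧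
      ncf (γ.subtypePerm (fun x => (hγS x).symm) * (retPerm π S)⁻¹) + ncl π (sF S) ≤ Fintype.card S + 1 ∧
      ((∃ x ∈ S, ∃ j, j ∉ S ∧ (γ * π⁻¹).SameCycle x j) → 1 ≤ u) ∧
      (u = 1 → ∀ a : S, (∃ j, j ∉ S ∧ (γ * π⁻¹).SameCycle a.1 j) →
        {y : S | ∃ j, j ∉ S ∧ (γ * π⁻¹).SameCycle y.1 j} =
          {y : S | (γ.subtypePerm (fun x => (hγS x).symm) * (retPerm π S)⁻¹).SameCycle a y}) := by
  haveI : Nonempty S := hSne.to_subtype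
  set σ := γ * π⁻¹ with hσdef
  set P := retPerm π S with hPdef
  set ρ := γ.subtypePerm (fun x => (hγS x).symm) with hρdef
  set Sg := ρ * P⁻¹ with hSgdef
  set Bb : Set S := {a : S | ∃ j, j ∉ S ∧ σ.SameCycle a.1 j} with hBbdef
  -- Step 1: pointwise identification off the through-part
  have hB : ∀ a : S, σ a.1 ∈ S → (Sg a).1 = σ a.1 := by
    intro a haS
    set a' := P⁻¹ a with ha'
    have hPa' : P a' = a := by rw [ha']; simp
    obtain ⟨k, hk0, heq, hmem, hmin⟩ := firstReturn_spec π S a'.2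
    have hval : a.1 = (π ^ k) a'.1 := by
      rw [← hPa']
      exact heq
    have hπinv : ∀ z : Fin N, π⁻¹ ((π ^ k) z) = (π ^ (k - 1)) z := by
      intro z
      have : π ^ k = π * π ^ (k - 1) := by
        rw [← pow_succ']
        congr 1
        omega
      rw [this, Equiv.Perm.mul_apply]; simp
    have hσa : σ a.1 = γ ((π ^ (k - 1)) a'.1) := by
      rw [hσdef, Equiv.Perm.mul_apply, hval, hπinv]
    rcases eq_or_lt_of_le (Nat.one_le_iff_ne_zero.2 (Nat.pos_iff_ne_zero.1 hk0)) with hk1 | hk2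
    · -- k = 1
      have hk1' : k = 1 := hk1.symm
      have : (Sg a).1 = γ a'.1 := by
        rw [hSgdef, Equiv.Perm.mul_apply, ← ha']
        rfl
      rw [this, hσa, hk1']
      simp
    · -- k ≥ 2
      exfalso
      have hnot : (π ^ (k - 1)) a'.1 ∉ S := hmin (k - 1) (by omega) (by omega)
      apply hnot
      rw [hγS]
      rw [← hσa]
      exact haS
  have hBc : ∀ a : S, a ∉ Bb → σ a.1 ∈ S := by
    intro a ha
    by_contra hc
    exact ha ⟨σ a.1, hc, ⟨1, by simp⟩⟩
  have hstep : ∀ a : S, a ∉ Bb → (Sg a).1 = σ a.1 ∧ Sg a ∉ Bb := by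
    intro a ha
    have h1 := hB a (hBc a ha)
    refine ⟨h1, ?_⟩
    rintro ⟨j, hj, hsc⟩
    rw [h1] at hsc
    exact ha ⟨j, hj, (show σ.SameCycle a.1 (σ a.1) from ⟨1, by simp⟩).trans hsc⟩
  have hpow : ∀ (k : ℕ) (a : S), a ∉ Bb →
      ((Sg ^ k) a).1 = (σ ^ k) a.1 ∧ (Sg ^ k) a ∉ Bb := by
    intro k
    induction k with
    | zero => intro a ha; exact ⟨by simp, by simpa using ha⟩
    | succ k ih =>
      intro a ha
      obtain ⟨h1, h2⟩ := ih a ha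
      obtain ⟨h3, h4⟩ := hstep _ h2
      constructor
      · have e1 : (Sg ^ (k + 1)) a = Sg ((Sg ^ k) a) := by rw [pow_succ', Equiv.Perm.mul_apply]
        have e2 : (σ ^ (k + 1)) a.1 = σ ((σ ^ k) a.1) := by rw [pow_succ', Equiv.Perm.mul_apply]
        rw [e1, e2, h3, h1]
      · have e1 : (Sg ^ (k + 1)) a = Sg ((Sg ^ k) a) := by rw [pow_succ', Equiv.Perm.mul_apply]
        rw [e1]
        exact h4
  have hsc_out : ∀ a y : S, a ∉ Bb → Sg.SameCycle a y → y ∉ Bb := by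
    intro a y ha hsc
    obtain ⟨t, _, ht⟩ := hsc.exists_pow_eq'
    rw [← ht]
    exact (hpow t a ha).2
  set BbcF : Finset S := Finset.univ.filter (fun a : S => a ∉ Bb) with hBbcF
  set BbF : Finset S := Finset.univ.filter (fun a : S => a ∈ Bb) with hBbF
  have hdecomp : ncf Sg = ncl Sg BbcF + ncl Sg BbF := by
    have hu : BbcF ∪ BbF = Finset.univ := by
      ext a
      simp only [Finset.mem_union, hBbcF, hBbF, Finset.mem_filter, Finset.mem_univ,
        true_and, iff_true]
      tauto
    have := ncl_union (σ := Sg) (S := BbcF) (T := BbF) (fun a ha b hb hab => by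
      simp only [hBbcF, Finset.mem_filter, Finset.mem_univ, true_and] at ha
      simp only [hBbF, Finset.mem_filter, Finset.mem_univ, true_and] at hb
      exact (hsc_out a b ha hab) hb)
    rw [hu] at this
    rw [ncf, this]
  have htrans : ncl Sg BbcF = ncl σ (wsF σ S) := by
    have h := ncl_transfer (Subtype.val : S → Fin N) Sg σ BbcF (by
      intro a ha b hb
      simp only [hBbcF, Finset.mem_filter, Finset.mem_univ, true_and] at ha hb
      constructor
      · intro hsc
        obtain ⟨t, _, ht⟩ := hsc.exists_pow_eq'
        have := (hpow t a ha).1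
        rw [ht] at this
        exact ⟨(t : ℤ), by rw [zpow_natCast, ← this]⟩
      · intro hsc
        obtain ⟨t, _, ht⟩ := hsc.exists_pow_eq'
        have hv := (hpow t a ha).1
        have : (Sg ^ t) a = b := Subtype.ext (by rw [hv, ht])
        exact ⟨(t : ℤ), by rw [zpow_natCast, this]⟩)
    rw [h]
    congr 1
    ext x
    simp only [Finset.mem_image, hBbcF, Finset.mem_filter, Finset.mem_univ, true_and,
      mem_wsF]
    constructor
    · rintro ⟨a, ha, rfl⟩
      refine ⟨a.2, fun j hj => ?_⟩
      by_contra hc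
      exact ha ⟨j, hc, hj⟩
    · rintro ⟨hxS, hall⟩
      refine ⟨⟨x, hxS⟩, ?_, rfl⟩
      rintro ⟨j, hj, hsc⟩
      exact hj (hall j hsc)
  refine ⟨ncl Sg BbF, by rw [hdecomp, htrans], ?_, ?_, ?_⟩
  · -- upper bound
    have hP : ncf P = ncl π (sF S) := by
      have h := ncl_transfer (Subtype.val : S → Fin N) P π Finset.univ (by
        intro a _ b _
        exact retPerm_sameCycle π S a b)
      rw [ncf, h]
      congr 1
      ext x
      simp only [Finset.mem_image, Finset.mem_univ, true_and, mem_sF]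
      constructor
      · rintro ⟨a, rfl⟩
        exact a.2
      · intro hx
        exact ⟨⟨x, hx⟩, rfl⟩
    have hgenus := ncf_genus P Sg
    have hρ1 : Sg * P = ρ := by
      rw [hSgdef, mul_assoc, inv_mul_cancel, mul_one]
    have hρncf : ncf ρ = 1 := ncf_eq_one (fun a b => hrot a b)
    rw [hρ1, hρncf] at hgenus
    omega
  · -- lower bound on u
    rintro ⟨x, hxS, j, hj, hsc⟩
    have hmem : (⟨x, hxS⟩ : S) ∈ BbF := by
      simp only [hBbF, Finset.mem_filter, Finset.mem_univ, true_and]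
      exact ⟨j, hj, hsc⟩
    rw [ncl]
    exact Finset.card_pos.2 ⟨cls Sg ⟨x, hxS⟩, Finset.mem_image_of_mem _ hmem⟩
  · -- block structure when u = 1
    intro hu a haBb
    have haF : a ∈ BbF := by
      simp only [hBbF, Finset.mem_filter, Finset.mem_univ, true_and]
      exact haBb
    rw [ncl, Finset.card_eq_one] at hu
    obtain ⟨C, hC⟩ := hu
    have haC : cls Sg a = C := by
      have := Finset.mem_image_of_mem (cls Sg) haF
      rw [hC, Finset.mem_singleton] at this
      exact this
    ext y
    simp only [Set.mem_setOf_eq]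
    constructor
    · intro hyBb
      have hyF : y ∈ BbF := by
        simp only [hBbF, Finset.mem_filter, Finset.mem_univ, true_and]
        exact hyBb
      have hyC : cls Sg y = C := by
        have := Finset.mem_image_of_mem (cls Sg) hyF
        rw [hC, Finset.mem_singleton] at this
        exact this
      exact cls_eq_iff.1 (haC.trans hyC.symm)
    · intro hsc
      by_contra hyBb
      exact (hsc_out y a hyBb hsc.symm) haBb

end Side
lemma ncf_conj {α : Type*} [Fintype α] [DecidableEq α] (τ g : Perm α) :
    ncf (g * τ * g⁻¹) = ncf τ := by
  have h := ncl_transfer (⇑g) τ (g * τ * g⁻¹) Finset.univ (fun a _ b _ => by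
    rw [Equiv.Perm.sameCycle_conj]
    simp)
  have himg : Finset.univ.image (⇑g) = Finset.univ := by
    ext x
    simp only [Finset.mem_image, Finset.mem_univ, true_and, iff_true]
    exact ⟨g⁻¹ x, by simp⟩
  unfold ncf
  rw [himg] at h
  exact h.symm

section Assembly2

/-- The left boundary `{0,…,m-1}` of the annulus. -/
def setA (m n : ℕ) : Set (Fin (m + n)) := {j : Fin (m + n) | (j : ℕ) < m}

lemma mem_setA {m n : ℕ} {x : Fin (m + n)} : x ∈ setA m n ↔ (x : ℕ) < m := Iff.rfl

lemma gammaA (m n : ℕ) : ∀ x : Fin (m + n), x ∈ setA m n ↔ annRot m n x ∈ setA m n := by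
  intro x
  rw [mem_setA, mem_setA, annRot_lt_iff]

lemma gammaAc (m n : ℕ) :
    ∀ x : Fin (m + n), x ∈ (setA m n)ᶜ ↔ annRot m n x ∈ (setA m n)ᶜ := by
  intro x
  simp only [Set.mem_compl_iff]
  exact not_congr (gammaA m n x)

lemma eLsurj {m n : ℕ} (a : setA m n) :
    ∃ i : Fin m, (⟨Fin.castAdd n i, i.isLt⟩ : setA m n) = a := by
  obtain ⟨x, hx⟩ := a
  exact ⟨⟨(x : ℕ), hx⟩, Subtype.ext (Fin.ext rfl)⟩

lemma eRmem {m n : ℕ} (j : Fin n) : Fin.natAdd m j ∈ (setA m n)ᶜ := by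
  simp only [Set.mem_compl_iff, mem_setA, Fin.coe_natAdd, not_lt]
  omega

lemma eRsurj {m n : ℕ} (a : ((setA m n)ᶜ : Set (Fin (m + n)))) :
    ∃ j : Fin n, (⟨Fin.natAdd m j, eRmem j⟩ : ((setA m n)ᶜ : Set (Fin (m + n)))) = a := by
  obtain ⟨x, hx⟩ := a
  simp only [Set.mem_compl_iff, mem_setA, not_lt] at hx
  have hxlt : (x : ℕ) < m + n := x.isLt
  refine ⟨⟨(x : ℕ) - m, by omega⟩, Subtype.ext (Fin.ext ?_)⟩
  show m + ((x : ℕ) - m) = (x : ℕ)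
  omega

lemma rotA (m n : ℕ) :
    ∀ a b : setA m n, ((annRot m n).subtypePerm (fun x => (gammaA m n x).symm)).SameCycle a b := by
  have hequi : ∀ i : Fin m,
      ((annRot m n).subtypePerm (fun x => (gammaA m n x).symm)) ⟨Fin.castAdd n i, i.isLt⟩
        = ⟨Fin.castAdd n (finRotate m i), (finRotate m i).isLt⟩ := by
    intro i
    apply Subtype.ext
    show annRot m n (Fin.castAdd n i) = Fin.castAdd n (finRotate m i)
    rw [annRot_castAdd]
  intro a b
  obtain ⟨i, rfl⟩ := eLsurj a
  obtain ⟨j, rfl⟩ := eLsurj b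
  exact sameCycle_map (finRotate m) ((annRot m n).subtypePerm (fun x => (gammaA m n x).symm))
    (fun i : Fin m => (⟨Fin.castAdd n i, i.isLt⟩ : setA m n)) hequi
    (sameCycle_finRotate i j)

lemma rotAc (m n : ℕ) :
    ∀ a b : ((setA m n)ᶜ : Set (Fin (m + n))),
      ((annRot m n).subtypePerm (fun x => (gammaAc m n x).symm)).SameCycle a b := by
  have hequi : ∀ j : Fin n,
      ((annRot m n).subtypePerm (fun x => (gammaAc m n x).symm)) ⟨Fin.natAdd m j, eRmem j⟩
        = ⟨Fin.natAdd m (finRotate n j), eRmem _⟩ := by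
    intro j
    apply Subtype.ext
    show annRot m n (Fin.natAdd m j) = Fin.natAdd m (finRotate n j)
    rw [annRot_natAdd]
  intro a b
  obtain ⟨i, rfl⟩ := eRsurj a
  obtain ⟨j, rfl⟩ := eRsurj b
  exact sameCycle_map (finRotate n) ((annRot m n).subtypePerm (fun x => (gammaAc m n x).symm))
    (fun j : Fin n => (⟨Fin.natAdd m j, eRmem j⟩ : ((setA m n)ᶜ : Set (Fin (m + n)))))
    hequi (sameCycle_finRotate i j)

lemma setA_ne {m n : ℕ} (hm : 1 ≤ m) : (setA m n).Nonempty :=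
  ⟨⟨0, by omega⟩, by rw [mem_setA]; exact hm⟩

lemma setAc_ne {m n : ℕ} (hn : 1 ≤ n) : ((setA m n)ᶜ : Set (Fin (m + n))).Nonempty :=
  ⟨⟨m, by omega⟩, by simp only [Set.mem_compl_iff, mem_setA]; simp⟩

lemma card_setA (m n : ℕ) {inst : Fintype (setA m n)} :
    @Fintype.card _ inst = m := by
  have h := Fintype.card_of_bijective (f := fun i : Fin m =>
      (⟨Fin.castAdd n i, i.isLt⟩ : setA m n))
    ⟨by
      intro a b hab
      have := congrArg (fun z : setA m n => ((z : Fin (m + n)) : ℕ)) hab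
      exact Fin.ext this, fun a => eLsurj a⟩
  rw [Fintype.card_fin] at h
  exact h.symm

lemma card_setAc (m n : ℕ) {inst : Fintype ((setA m n)ᶜ : Set (Fin (m + n)))} :
    @Fintype.card _ inst = n := by
  have h := Fintype.card_of_bijective (f := fun j : Fin n =>
      (⟨Fin.natAdd m j, eRmem j⟩ : ((setA m n)ᶜ : Set (Fin (m + n)))))
    ⟨by
      intro a b hab
      have := congrArg (fun z : ((setA m n)ᶜ : Set (Fin (m + n))) =>
        ((z : Fin (m + n)) : ℕ)) hab
      simp only [Fin.coe_natAdd] at this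
      exact Fin.ext (by omega), fun a => eRsurj a⟩
  rw [Fintype.card_fin] at h
  exact h.symm

end Assembly2

end NCAux

open NCAux in
open scoped Classical in
theorem stmt10 (m n : ℕ) (hm : 1 ≤ m) (hn : 1 ≤ n)
    (π : Equiv.Perm (Fin (m + n))) (hπ : IsAnnularNC m n π)
    (π₁ : Equiv.Perm (Fin m))
    (hπ₁ : ∀ i : Fin m,
      Fin.castAdd n (π₁ i) =
        firstReturn π {j : Fin (m + n) | (j : ℕ) < m} (Fin.castAdd n i))
    (Bbar : Set (Fin m))
    (hBbar : Bbar = {i : Fin m | ∃ j : Fin (m + n), m ≤ (j : ℕ) ∧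
      (annRot m n * π⁻¹).SameCycle (Fin.castAdd n i) j}) :
    IsBlock (finRotate m * π₁⁻¹) Bbar := by
  obtain ⟨hthru, hcount⟩ := hπ
  have hπ₁' : ∀ i : Fin m,
      Fin.castAdd n (π₁ i) = firstReturn π (setA m n) (Fin.castAdd n i) := hπ₁
  -- through cycles of σ := annRot * π⁻¹ exist
  have hσthr : ∃ x ∈ setA m n, ∃ j, j ∉ setA m n ∧ (annRot m n * π⁻¹).SameCycle x j := by
    by_contra hcon
    push_neg at hcon
    have hπA : ∀ x, x ∈ setA m n → π x ∈ setA m n := by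
      intro x hx
      have h1 : π x = (annRot m n * π⁻¹)⁻¹ (annRot m n x) := by
        simp [Equiv.Perm.mul_apply]
      have h2 : (annRot m n * π⁻¹).SameCycle (annRot m n x)
          ((annRot m n * π⁻¹)⁻¹ (annRot m n x)) := ⟨-1, by simp⟩
      have h3 : annRot m n x ∈ setA m n := (gammaA m n x).1 hx
      by_contra hc
      rw [h1] at hc
      exact hcon (annRot m n x) h3 _ hc h2
    have hπpow : ∀ (k : ℕ) (x : Fin (m + n)), x ∈ setA m n → (π ^ k) x ∈ setA m n := by
      intro k
      induction k with
      | zero => intro x hx; simpa using hx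
      | succ k ih =>
        intro x hx
        rw [pow_succ', Equiv.Perm.mul_apply]
        exact hπA _ (ih x hx)
    obtain ⟨x, y, hx, hy, hsc⟩ := hthru
    obtain ⟨k, _, hk⟩ := hsc.exists_pow_eq'
    have hyA : y ∈ setA m n := hk ▸ hπpow k x hx
    rw [mem_setA] at hyA
    omega
  have hσthr' : ∃ x ∈ ((setA m n)ᶜ : Set (Fin (m + n))),
      ∃ j, j ∉ ((setA m n)ᶜ : Set (Fin (m + n))) ∧ (annRot m n * π⁻¹).SameCycle x j := by
    obtain ⟨x, hx, j, hj, hsc⟩ := hσthr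
    exact ⟨j, hj, x, by simpa using hx, hsc.symm⟩
  -- through cycles of σ' := annRot * σ⁻¹ = annRot * π * annRot⁻¹ exist
  have hσ'conj : annRot m n * (annRot m n * π⁻¹)⁻¹ = annRot m n * π * (annRot m n)⁻¹ := by
    group
  have hτthr : ∃ x ∈ setA m n, ∃ j, j ∉ setA m n ∧
      (annRot m n * (annRot m n * π⁻¹)⁻¹).SameCycle x j := by
    obtain ⟨x, y, hx, hy, hsc⟩ := hthru
    refine ⟨annRot m n x, (gammaA m n x).1 hx, annRot m n y, ?_, ?_⟩
    · intro hc
      rw [← gammaA m n y, mem_setA] at hc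
      omega
    · rw [hσ'conj]
      exact Equiv.Perm.sameCycle_conj.2 (by simpa using hsc)
  have hτthr' : ∃ x ∈ ((setA m n)ᶜ : Set (Fin (m + n))),
      ∃ j, j ∉ ((setA m n)ᶜ : Set (Fin (m + n))) ∧
        (annRot m n * (annRot m n * π⁻¹)⁻¹).SameCycle x j := by
    obtain ⟨x, hx, j, hj, hsc⟩ := hτthr
    exact ⟨j, hj, x, by simpa using hx, hsc.symm⟩
  -- the four side analyses
  obtain ⟨u1, e1, up1, lo1, blk1⟩ := side_main π (annRot m n) (setA m n)
    (gammaA m n) (rotA m n) (setA_ne hm)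
  obtain ⟨u2, e2, up2, lo2, -⟩ := side_main π (annRot m n) ((setA m n)ᶜ)
    (gammaAc m n) (rotAc m n) (setAc_ne hn)
  obtain ⟨v1, f1, vp1, vlo1, -⟩ := side_main (annRot m n * π⁻¹) (annRot m n) (setA m n)
    (gammaA m n) (rotA m n) (setA_ne hm)
  obtain ⟨v2, f2, vp2, vlo2, -⟩ := side_main (annRot m n * π⁻¹) (annRot m n) ((setA m n)ᶜ)
    (gammaAc m n) (rotAc m n) (setAc_ne hn)
  have hu1 : 1 ≤ u1 := lo1 hσthr
  have hu2 : 1 ≤ u2 := lo2 hσthr'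
  have hv1 : 1 ≤ v1 := vlo1 hτthr
  have hv2 : 1 ≤ v2 := vlo2 hτthr'
  -- global counting identities
  have I1 := identityS π (setA m n)
  have I2 := decompU (annRot m n * π⁻¹) (setA m n)
  have I3 := identityS (annRot m n * π⁻¹) (setA m n)
  have I4 := decompU (annRot m n * (annRot m n * π⁻¹)⁻¹) (setA m n)
  have I5 : ncl (annRot m n * (annRot m n * π⁻¹)⁻¹)
      (ttF (annRot m n * (annRot m n * π⁻¹)⁻¹) (setA m n))
        = ncl π (ttF π (setA m n)) := by
    rw [hσ'conj]
    exact tt_conj π (annRot m n) (setA m n) (gammaA m n)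
  have I6 : ncf π + ncf (annRot m n * π⁻¹) = m + n := by
    rw [← numOrbits_eq_ncf, ← numOrbits_eq_ncf]
    exact hcount
  have I7 : ncf (annRot m n * (annRot m n * π⁻¹)⁻¹) = ncf π := by
    rw [hσ'conj]
    exact ncf_conj π (annRot m n)
  rw [card_setA] at up1 vp1
  rw [card_setAc] at up2 vp2
  have hu1eq : u1 = 1 := by omega
  -- extract the block
  obtain ⟨x0, hx0A, j0, hj0, hsc0⟩ := hσthr
  have hblk := blk1 hu1eq ⟨x0, hx0A⟩ ⟨j0, hj0, hsc0⟩
  -- translate back to Fin m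
  set eL : Fin m → (setA m n) := fun i => ⟨Fin.castAdd n i, i.isLt⟩ with heLdef
  have hP : ∀ j : Fin m, (retPerm π (setA m n)) (eL j) = eL (π₁ j) := by
    intro j
    apply Subtype.ext
    rw [retPerm_apply_val]
    exact (hπ₁' j).symm
  have hPinv : ∀ i : Fin m, (retPerm π (setA m n))⁻¹ (eL i) = eL (π₁⁻¹ i) := by
    intro i
    have h := hP (π₁⁻¹ i)
    rw [show π₁ (π₁⁻¹ i) = i from by simp] at h
    rw [← h]; simp
  have hequi : ∀ i : Fin m,
      ((annRot m n).subtypePerm (fun x => (gammaA m n x).symm) * (retPerm π (setA m n))⁻¹) (eL i)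
        = eL ((finRotate m * π₁⁻¹) i) := by
    intro i
    rw [Equiv.Perm.mul_apply, hPinv]
    apply Subtype.ext
    show annRot m n (Fin.castAdd n (π₁⁻¹ i)) = Fin.castAdd n ((finRotate m * π₁⁻¹) i)
    rw [annRot_castAdd]
    rfl
  have heLinv : ∀ i : Fin m, (⟨((eL i : Fin (m + n)) : ℕ), (eL i).2⟩ : Fin m) = i :=
    fun i => Fin.ext rfl
  have hsc_iff : ∀ i j : Fin m, (finRotate m * π₁⁻¹).SameCycle i j ↔
      ((annRot m n).subtypePerm (fun x => (gammaA m n x).symm)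
        * (retPerm π (setA m n))⁻¹).SameCycle (eL i) (eL j) := by
    intro i j
    constructor
    · exact fun h => sameCycle_map _ _ eL hequi h
    · intro h
      have hinv : ∀ a : (setA m n),
          (finRotate m * π₁⁻¹) ⟨((a : Fin (m + n)) : ℕ), a.2⟩
            = ⟨((((annRot m n).subtypePerm (fun x => (gammaA m n x).symm)
                * (retPerm π (setA m n))⁻¹) a : Fin (m + n)) : ℕ),
              (((annRot m n).subtypePerm (fun x => (gammaA m n x).symm)
                * (retPerm π (setA m n))⁻¹) a).2⟩ := by
        intro a
        have ha : eL ⟨((a : Fin (m + n)) : ℕ), a.2⟩ = a := Subtype.ext (Fin.ext rfl)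
        have h2 := hequi ⟨((a : Fin (m + n)) : ℕ), a.2⟩
        rw [ha] at h2
        rw [h2]
        exact (heLinv _).symm
      have h3 := sameCycle_map _ _ (fun a : (setA m n) =>
        (⟨((a : Fin (m + n)) : ℕ), a.2⟩ : Fin m)) hinv h
      simpa only [heLinv] using h3
  rw [IsBlock]
  refine ⟨⟨((x0 : Fin (m + n)) : ℕ), hx0A⟩, ?_⟩
  rw [hBbar]
  ext y
  simp only [Set.mem_setOf_eq]
  have h1 : (∃ j : Fin (m + n), m ≤ (j : ℕ) ∧
        (annRot m n * π⁻¹).SameCycle (Fin.castAdd n y) j)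
      ↔ eL y ∈ {z : (setA m n) | ∃ j, j ∉ setA m n
          ∧ (annRot m n * π⁻¹).SameCycle z.1 j} := by
    simp only [Set.mem_setOf_eq]
    constructor
    · rintro ⟨j, hj, hsc⟩
      exact ⟨j, by rw [mem_setA]; omega, hsc⟩
    · rintro ⟨j, hj, hsc⟩
      rw [mem_setA] at hj
      exact ⟨j, by omega, hsc⟩
  rw [h1, hblk]
  simp only [Set.mem_setOf_eq]
  have heq : eL ⟨((x0 : Fin (m + n)) : ℕ), hx0A⟩ = ⟨x0, hx0A⟩ := Subtype.ext (Fin.ext rfl)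
  rw [← heq]
  exact (hsc_iff _ y).symm
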